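/- arXiv:2511.03744 — 2 statements merged into one kernel-verified Lean document; each statement's English description precedes it below -/
import Mathlib

section
/- Assume ‖A_k‖₂ ≤ β < 1 for all k, ‖Φ_k‖₂ ≤ σ₀², and ‖C_k‖₂ ≤ (c·‖B‖₂·ρ/(1-βρ))·σ₀² with c ≥ 1, ρ ∈ [0,1). If Σ_0 = 0 and Σ_{k+1} = A_k Σ_k A_k^⊤ + B Φ_k B^⊤ + A_k C_k B^⊤ + B C_k^⊤ A_k^⊤, then for all k, ‖Σ_k‖₂ ≤ C₂·σ₀², where C₂ = (1 + C₁)·‖B‖₂²/(1-β²) and C₁ = 2cβρ/(1-βρ). In particular sup_k ‖Σ_k‖₂ = O(σ₀²). -/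
open scoped Matrix.Norms.L2Operator
open Matrix

lemma l2_norm_transpose {n m : ℕ} (A : Matrix (Fin n) (Fin m) ℝ) : ‖Aᵀ‖ = ‖A‖ := by
  rw [← Matrix.conjTranspose_eq_transpose_of_trivial, Matrix.l2_opNorm_conjTranspose]

/-- Uniform boundedness and `O(σ₀²)` scaling of the state covariance under
Schur-stable time-varying closed-loop dynamics driven by an AR(1) deviation:
`‖Σ_k‖₂ ≤ C₂ σ₀²` with `C₂ = (1 + C₁) ‖B‖₂² / (1 - β²)`, `C₁ = 2cβρ/(1-βρ)`. -/
theorem state_covariance_uniform_bound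
    {n m : ℕ} (A : ℕ → Matrix (Fin n) (Fin n) ℝ) (B : Matrix (Fin n) (Fin m) ℝ)
    (Φ : ℕ → Matrix (Fin m) (Fin m) ℝ) (C : ℕ → Matrix (Fin n) (Fin m) ℝ)
    (Sig : ℕ → Matrix (Fin n) (Fin n) ℝ)
    (c β ρ σ0 : ℝ) (hc : 1 ≤ c) (hβ0 : 0 < β) (hβ1 : β < 1)
    (hρ0 : 0 ≤ ρ) (hρ1 : ρ < 1)
    (hA : ∀ k, ‖A k‖ ≤ β)
    (hΦ : ∀ k, ‖Φ k‖ ≤ σ0 ^ 2)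
    (hC : ∀ k, ‖C k‖ ≤ (c * ‖B‖ * ρ / (1 - β * ρ)) * σ0 ^ 2)
    (h0 : Sig 0 = 0)
    (hrec : ∀ k, Sig (k + 1) =
      A k * Sig k * (A k)ᵀ + B * Φ k * Bᵀ + A k * C k * Bᵀ + B * (C k)ᵀ * (A k)ᵀ) :
    ∀ k, ‖Sig k‖ ≤
      ((1 + 2 * c * β * ρ / (1 - β * ρ)) * ‖B‖ ^ 2 / (1 - β ^ 2)) * σ0 ^ 2 := by
  have hβρ : 0 < 1 - β * ρ := by nlinarith
  have hβ2 : 0 < 1 - β ^ 2 := by nlinarith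
  have hB : (0:ℝ) ≤ ‖B‖ := norm_nonneg _
  have hσ : (0:ℝ) ≤ σ0 ^ 2 := sq_nonneg _
  set M : ℝ := ((1 + 2 * c * β * ρ / (1 - β * ρ)) * ‖B‖ ^ 2 / (1 - β ^ 2)) * σ0 ^ 2 with hM
  have hC1 : (0:ℝ) ≤ 2 * c * β * ρ / (1 - β * ρ) := by positivity
  have hMnn : 0 ≤ M := by positivity
  intro k
  induction k with
  | zero => simp [h0, hMnn]
  | succ k ih =>
    rw [hrec k]
    have hAk := hA k
    have hAkT : ‖(A k)ᵀ‖ ≤ β := by rw [l2_norm_transpose]; exact hAk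
    have hAnn : (0:ℝ) ≤ ‖A k‖ := norm_nonneg _
    have t1 : ‖A k * Sig k * (A k)ᵀ‖ ≤ β * M * β := by
      calc ‖A k * Sig k * (A k)ᵀ‖ ≤ ‖A k * Sig k‖ * ‖(A k)ᵀ‖ := Matrix.l2_opNorm_mul _ _
        _ ≤ ‖A k‖ * ‖Sig k‖ * ‖(A k)ᵀ‖ := by
            gcongr; exact Matrix.l2_opNorm_mul _ _
        _ ≤ β * M * β := by gcongr
    have t2 : ‖B * Φ k * Bᵀ‖ ≤ ‖B‖ * σ0 ^ 2 * ‖B‖ := by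
      calc ‖B * Φ k * Bᵀ‖ ≤ ‖B * Φ k‖ * ‖Bᵀ‖ := Matrix.l2_opNorm_mul _ _
        _ ≤ ‖B‖ * ‖Φ k‖ * ‖Bᵀ‖ := by gcongr; exact Matrix.l2_opNorm_mul _ _
        _ ≤ ‖B‖ * σ0 ^ 2 * ‖B‖ := by
            rw [l2_norm_transpose]; gcongr; exact hΦ k
    have hCk := hC k
    have hCkT : ‖(C k)ᵀ‖ ≤ (c * ‖B‖ * ρ / (1 - β * ρ)) * σ0 ^ 2 := by
      rw [l2_norm_transpose]; exact hCk
    have t3 : ‖A k * C k * Bᵀ‖ ≤ β * ((c * ‖B‖ * ρ / (1 - β * ρ)) * σ0 ^ 2) * ‖B‖ := by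
      calc ‖A k * C k * Bᵀ‖ ≤ ‖A k * C k‖ * ‖Bᵀ‖ := Matrix.l2_opNorm_mul _ _
        _ ≤ ‖A k‖ * ‖C k‖ * ‖Bᵀ‖ := by gcongr; exact Matrix.l2_opNorm_mul _ _
        _ ≤ β * ((c * ‖B‖ * ρ / (1 - β * ρ)) * σ0 ^ 2) * ‖B‖ := by
            rw [l2_norm_transpose]; gcongr
    have t4 : ‖B * (C k)ᵀ * (A k)ᵀ‖ ≤ ‖B‖ * ((c * ‖B‖ * ρ / (1 - β * ρ)) * σ0 ^ 2) * β := by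
      calc ‖B * (C k)ᵀ * (A k)ᵀ‖ ≤ ‖B * (C k)ᵀ‖ * ‖(A k)ᵀ‖ := Matrix.l2_opNorm_mul _ _
        _ ≤ ‖B‖ * ‖(C k)ᵀ‖ * ‖(A k)ᵀ‖ := by gcongr; exact Matrix.l2_opNorm_mul _ _
        _ ≤ ‖B‖ * ((c * ‖B‖ * ρ / (1 - β * ρ)) * σ0 ^ 2) * β := by
            gcongr
    have tri : ‖A k * Sig k * (A k)ᵀ + B * Φ k * Bᵀ + A k * C k * Bᵀ + B * (C k)ᵀ * (A k)ᵀ‖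
        ≤ ‖A k * Sig k * (A k)ᵀ‖ + ‖B * Φ k * Bᵀ‖ + ‖A k * C k * Bᵀ‖ + ‖B * (C k)ᵀ * (A k)ᵀ‖ := by
      calc _ ≤ ‖A k * Sig k * (A k)ᵀ + B * Φ k * Bᵀ + A k * C k * Bᵀ‖ + ‖B * (C k)ᵀ * (A k)ᵀ‖ :=
            norm_add_le _ _
        _ ≤ _ := by
            gcongr
            calc _ ≤ ‖A k * Sig k * (A k)ᵀ + B * Φ k * Bᵀ‖ + ‖A k * C k * Bᵀ‖ := norm_add_le _ _
              _ ≤ _ := by gcongr; exact norm_add_le _ _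
    have key : β * M * β + ‖B‖ * σ0 ^ 2 * ‖B‖
        + β * ((c * ‖B‖ * ρ / (1 - β * ρ)) * σ0 ^ 2) * ‖B‖
        + ‖B‖ * ((c * ‖B‖ * ρ / (1 - β * ρ)) * σ0 ^ 2) * β ≤ M := by
      rw [hM]
      have e1 : (1 - β * ρ) ≠ 0 := ne_of_gt hβρ
      have e2 : (1 - β ^ 2) ≠ 0 := ne_of_gt hβ2
      refine le_of_eq ?_
      field_simp
      ring
    linarith [tri, t1, t2, t3, t4]
end

section
/- In the setting above with R ≻ 0, Ψ ⪰ 0, if Γ ≠ 0 and Ψ ≻ 0 and KΓ ≠ 0, then J(L*) < J(0), i.e., the optimal gain strictly reduces the quadratic cost relative to no compensation (L = 0). -/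
open Matrix

open scoped MatrixOrder

noncomputable def Matrix.PosSemidef.sqrt {a : ℕ} {A : Matrix (Fin a) (Fin a) ℝ}
    (_ : A.PosSemidef) : Matrix (Fin a) (Fin a) ℝ := CFC.sqrt A

lemma Matrix.PosSemidef.sqrt_mul_self {a : ℕ} {A : Matrix (Fin a) (Fin a) ℝ}
    (hA : A.PosSemidef) : hA.sqrt * hA.sqrt = A := CFC.sqrt_mul_sqrt_self A hA.nonneg

lemma Matrix.PosSemidef.posSemidef_sqrt {a : ℕ} {A : Matrix (Fin a) (Fin a) ℝ}
    (hA : A.PosSemidef) : hA.sqrt.PosSemidef := (CFC.sqrt_nonneg A).posSemidef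

private lemma trace_transpose_mul_self_pos {a b : ℕ}
    (A : Matrix (Fin a) (Fin b) ℝ) (hA : A ≠ 0) : 0 < (Aᵀ * A).trace := by
  have hAe : ∃ i j, A i j ≠ 0 := by
    by_contra h
    push_neg at h
    exact hA (by ext i j; simpa using h i j)
  obtain ⟨i0, j0, hij⟩ := hAe
  have htr : (Aᵀ * A).trace = ∑ j, ∑ i, A i j * A i j := by
    simp [Matrix.trace, Matrix.mul_apply, Matrix.diag, Matrix.transpose_apply]
  rw [htr]
  have hpos : 0 < ∑ i, A i j0 * A i j0 := by
    apply Finset.sum_pos' (fun i _ => mul_self_nonneg _)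
    exact ⟨i0, Finset.mem_univ _, mul_self_pos.mpr hij⟩
  apply Finset.sum_pos' (fun j _ => Finset.sum_nonneg fun i _ => mul_self_nonneg _)
  exact ⟨j0, Finset.mem_univ _, hpos⟩

private lemma sqrt_det_ne_zero {a : ℕ} {M : Matrix (Fin a) (Fin a) ℝ}
    (hM : M.PosDef) : hM.posSemidef.sqrt.det ≠ 0 := by
  intro h
  have h2 : M.det = hM.posSemidef.sqrt.det * hM.posSemidef.sqrt.det := by
    rw [← Matrix.det_mul, hM.posSemidef.sqrt_mul_self]
  rw [h, mul_zero] at h2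
  exact hM.det_pos.ne' h2

/-- Strict cost reduction of predictive compensation over no compensation:
with `R ≻ 0`, `Ψ ≻ 0`, `Γ ≠ 0`, and `K Γ ≠ 0`, the optimal gain
`L* = -K Γ Ψ⁻¹` satisfies `J(L*) < J(0)`. -/
theorem strict_cost_reduction
    {m n p : ℕ} (R : Matrix (Fin m) (Fin m) ℝ) (Ψ : Matrix (Fin p) (Fin p) ℝ)
    (K : Matrix (Fin m) (Fin n) ℝ) (Γ : Matrix (Fin n) (Fin p) ℝ)
    (hR : R.PosDef) (hΨ : Ψ.PosDef) (hΓ : Γ ≠ 0) (hKΓ : K * Γ ≠ 0)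
    (J : Matrix (Fin m) (Fin p) ℝ → ℝ)
    (hJ : ∀ L, J L = (Lᵀ * R * L * Ψ).trace + 2 * (Lᵀ * R * K * Γ).trace) :
    J (-(K * Γ * Ψ⁻¹)) < J 0 := by
  have hΨinv : (Ψ⁻¹).PosDef := hΨ.inv
  set C := K * Γ with hC
  set S := hΨinv.posSemidef.sqrt with hS
  set T := hR.posSemidef.sqrt with hT
  have hSsymm : Sᵀ = S := by
    have := hΨinv.posSemidef.posSemidef_sqrt.1
    rwa [Matrix.IsHermitian, conjTranspose_eq_transpose_of_trivial] at this
  have hTsymm : Tᵀ = T := by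
    have := hR.posSemidef.posSemidef_sqrt.1
    rwa [Matrix.IsHermitian, conjTranspose_eq_transpose_of_trivial] at this
  have hSS : S * S = Ψ⁻¹ := hΨinv.posSemidef.sqrt_mul_self
  have hTT : T * T = R := hR.posSemidef.sqrt_mul_self
  have hΨsymm : Ψ⁻¹ᵀ = Ψ⁻¹ := by
    have := hΨinv.1
    rwa [Matrix.IsHermitian, conjTranspose_eq_transpose_of_trivial] at this
  -- T * C * S ≠ 0
  have hSdet : S.det ≠ 0 := sqrt_det_ne_zero hΨinv
  have hTdet : T.det ≠ 0 := sqrt_det_ne_zero hR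
  have hSu : IsUnit S.det := isUnit_iff_ne_zero.mpr hSdet
  have hTu : IsUnit T.det := isUnit_iff_ne_zero.mpr hTdet
  have hTCS : T * C * S ≠ 0 := by
    intro h
    apply hKΓ
    have e : T⁻¹ * (T * C * S * S⁻¹) = C := by
      rw [Matrix.mul_assoc (T * C) S S⁻¹, Matrix.mul_nonsing_inv S hSu, Matrix.mul_one,
        ← Matrix.mul_assoc, ← Matrix.mul_assoc, Matrix.nonsing_inv_mul T hTu, Matrix.one_mul]
    rw [← e, h, Matrix.zero_mul, Matrix.mul_zero]
  have hkey : 0 < ((T * C * S)ᵀ * (T * C * S)).trace :=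
    trace_transpose_mul_self_pos _ hTCS
  -- rewrite the key trace
  have htr : ((T * C * S)ᵀ * (T * C * S)).trace = (Ψ⁻¹ * (Cᵀ * R * C)).trace := by
    have : (T * C * S)ᵀ * (T * C * S) = S * (Cᵀ * R * C) * S := by
      rw [Matrix.transpose_mul, Matrix.transpose_mul, hSsymm, hTsymm, ← hTT]
      simp only [Matrix.mul_assoc]
    rw [this, Matrix.trace_mul_comm, ← Matrix.mul_assoc, hSS]
  -- compute J values
  rw [hJ, hJ]
  have hL : (-(C * Ψ⁻¹))ᵀ = -(Ψ⁻¹ * Cᵀ) := by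
    rw [Matrix.transpose_neg, Matrix.transpose_mul, hΨsymm]
  rw [hL]
  have h1 : -(Ψ⁻¹ * Cᵀ) * R * -(C * Ψ⁻¹) * Ψ = Ψ⁻¹ * (Cᵀ * R * C) * (Ψ⁻¹ * Ψ) := by
    simp only [Matrix.neg_mul, Matrix.mul_neg, neg_neg, Matrix.mul_assoc]
  have h2 : -(Ψ⁻¹ * Cᵀ) * R * K * Γ = -(Ψ⁻¹ * (Cᵀ * R * C)) := by
    rw [hC]; simp only [Matrix.neg_mul, Matrix.mul_assoc]
  rw [h1, h2, Matrix.nonsing_inv_mul Ψ (isUnit_iff_ne_zero.mpr hΨ.det_pos.ne'), Matrix.mul_one]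
  simp only [Matrix.trace_neg, Matrix.transpose_zero, Matrix.zero_mul, Matrix.mul_zero,
    Matrix.trace_zero, mul_zero, add_zero, zero_add]
  rw [← htr]
  linarith
end
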